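/- There exist finitely many events A_1,…,A_m with positive probabilities in a probability space such that GK({A_i}_{i=1}^m) < KAT({A_i}_{i=1}^m), i.e., the Gallot–Kounias lower bound for P(⋃ A_i) is strictly smaller than the Kuai–Alajaji–Takahara lower bound. -/
import Mathlib

open MeasureTheory Filter Set

noncomputable def μ3 : Measure (Fin 3) := (3 : ENNReal)⁻¹ • Measure.count

lemma μ3_finset (s : Finset (Fin 3)) : μ3 (↑s : Set (Fin 3)) = (s.card : ENNReal) / 3 := by
  rw [μ3, Measure.smul_apply, Measure.count_apply_finset, smul_eq_mul,
    ENNReal.div_eq_inv_mul]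

lemma μ3_toReal (s : Finset (Fin 3)) : (μ3 (↑s : Set (Fin 3))).toReal = (s.card : ℝ) / 3 := by
  rw [μ3_finset, ENNReal.toReal_div]
  norm_num

instance : IsProbabilityMeasure μ3 := by
  constructor
  rw [show (Set.univ : Set (Fin 3)) = ↑(Finset.univ : Finset (Fin 3)) by simp, μ3_finset]
  norm_num [ENNReal.div_self]

theorem exists_GK_lt_KAT :
    ∃ (Ω : Type) (_ : MeasurableSpace Ω) (μ : Measure Ω) (_ : IsProbabilityMeasure μ)
      (m : ℕ) (A : Fin m → Set Ω),
      (∀ i, MeasurableSet (A i)) ∧ (∀ i, 0 < μ (A i)) ∧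
      sSup {x : ℝ | ∃ ω : Fin m → ℝ,
          x = (∑ i, ω i * (μ (A i)).toReal) ^ 2 /
            (∑ i, ∑ j, ω i * ω j * (μ (A i ∩ A j)).toReal)} <
        ∑ i,
          (Int.fract ((∑ j, (μ (A i ∩ A j)).toReal) / (μ (A i)).toReal) *
              (μ (A i)).toReal ^ 2 /
            ((∑ j, (μ (A i ∩ A j)).toReal) +
              (1 - Int.fract ((∑ j, (μ (A i ∩ A j)).toReal) / (μ (A i)).toReal)) *
                (μ (A i)).toReal) +
          (1 - Int.fract ((∑ j, (μ (A i ∩ A j)).toReal) / (μ (A i)).toReal)) *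
              (μ (A i)).toReal ^ 2 /
            ((∑ j, (μ (A i ∩ A j)).toReal) -
              Int.fract ((∑ j, (μ (A i ∩ A j)).toReal) / (μ (A i)).toReal) *
                (μ (A i)).toReal)) := by
  refine ⟨Fin 3, ⊤, μ3, inferInstance, 2,
    ![(↑({0,1} : Finset (Fin 3)) : Set (Fin 3)), (↑({1,2} : Finset (Fin 3)) : Set (Fin 3))],
    fun i => trivial, ?_, ?_⟩
  · intro i
    have h : ∀ s : Finset (Fin 3), s.Nonempty → 0 < μ3 (↑s : Set (Fin 3)) := by
      intro s hs
      rw [μ3_finset]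
      exact ENNReal.div_pos (by exact_mod_cast Nat.cast_pos.2 (Finset.card_pos.2 hs) |>.ne') (by norm_num)
    fin_cases i
    · exact h {0,1} (by decide)
    · exact h {1,2} (by decide)
  · have hint : ∀ i j : Fin 2,
        (![(↑({0,1} : Finset (Fin 3)) : Set (Fin 3)), (↑({1,2} : Finset (Fin 3)))] i ∩
         ![(↑({0,1} : Finset (Fin 3)) : Set (Fin 3)), (↑({1,2} : Finset (Fin 3)))] j) =
        ↑(![![({0,1} : Finset (Fin 3)), {1}], ![{1}, ({1,2} : Finset (Fin 3))]] i j) := by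
      intro i j
      fin_cases i <;> fin_cases j <;> · ext x; fin_cases x <;> simp
    simp only [Fin.sum_univ_two, hint, Matrix.cons_val_zero, Matrix.cons_val_one,
      Matrix.head_cons, μ3_toReal]
    rw [show (({0,1} : Finset (Fin 3)).card : ℝ) = 2 by rw [show ({0,1} : Finset (Fin 3)).card = 2 from rfl]; norm_num,
      show (({1,2} : Finset (Fin 3)).card : ℝ) = 2 by rw [show ({1,2} : Finset (Fin 3)).card = 2 from rfl]; norm_num,
      show (({1} : Finset (Fin 3)).card : ℝ) = 1 by rw [show ({1} : Finset (Fin 3)).card = 1 from rfl]; norm_num]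
    have hfract : Int.fract ((2/3 + 1/3 : ℝ) / (2/3)) = 1/2 := by
      rw [show ((2:ℝ)/3 + 1/3) / (2/3) = 3/2 by norm_num, Int.fract]
      rw [show ⌊(3/2 : ℝ)⌋ = 1 by rw [Int.floor_eq_iff] <;> norm_num]
      norm_num
    have hfract2 : Int.fract ((1/3 + 2/3 : ℝ) / (2/3)) = 1/2 := by
      rw [show ((1:ℝ)/3 + 2/3) / (2/3) = 3/2 by norm_num]
      rw [show ((2:ℝ)/3 + 1/3) / (2/3) = 3/2 by norm_num] at hfract
      exact hfract
    rw [hfract, hfract2]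
    have hbound : sSup {x : ℝ | ∃ ω : Fin 2 → ℝ,
        x = (ω 0 * (2/3) + ω 1 * (2/3)) ^ 2 /
          (ω 0 * ω 0 * (2/3) + ω 0 * ω 1 * (1/3) +
            (ω 1 * ω 0 * (1/3) + ω 1 * ω 1 * (2/3)))} ≤ 8/9 := by
      apply Real.sSup_le _ (by norm_num)
      rintro x ⟨ω, rfl⟩
      set a := ω 0; set b := ω 1
      rcases eq_or_lt_of_le (show (0:ℝ) ≤ a*a*(2/3) + a*b*(1/3) + (b*a*(1/3) + b*b*(2/3)) by nlinarith [sq_nonneg (a+b), sq_nonneg (a-b), sq_nonneg a, sq_nonneg b]) with h | h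
      · rw [← h, div_zero]; norm_num
      · rw [div_le_iff₀ h]; nlinarith [sq_nonneg (a-b)]
    calc sSup _ ≤ 8/9 := hbound
      _ < _ := by norm_num
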